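/- Let G = (V, E) be a finite simple graph, M a matching of G, and F the set of M-free vertices. Let y : V → ℝ, let Ω be a finite family of subsets of V each of odd cardinality, and let z : Ω → ℝ. Suppose every B ∈ Ω is full with respect to M, i.e. the number of edges of M with both endpoints in B equals (|B|−1)/2. Then Σ_{e=uv∈M} yz(e) = Σ_{u∈V∖F} y(u) + Σ_{B∈Ω} ((|B|−1)/2) · z(B), where yz(e) = y(u) + y(v) + Σ_{B∈Ω : u∈B and v∈B} z(B). -/

import Mathlib

open Finset
open scoped Classical

variable {V : Type*}

/-- `M` is a matching of the simple graph `G`: a set of edges of `G`,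
no two of which share an endpoint. -/
def IsMatching (G : SimpleGraph V) (M : Finset (Sym2 V)) : Prop :=
  (M : Set (Sym2 V)) ⊆ G.edgeSet ∧
    ∀ e ∈ M, ∀ f ∈ M, e ≠ f → ∀ v : V, v ∈ e → v ∉ f

/-- The total weight of a finite set of edges. -/
def mWeight (w : Sym2 V → ℝ) (M : Finset (Sym2 V)) : ℝ := ∑ e ∈ M, w e

/-- A vertex is `M`-free if it is not an endpoint of any edge of `M`. -/
def IsFreeVtx (M : Finset (Sym2 V)) (v : V) : Prop := ∀ e ∈ M, v ∉ e

/-- `yz(e) = y(u) + y(v) + ∑_{B ∈ Ω, u ∈ B, v ∈ B} z(B)` for an edge `e = uv`. -/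
noncomputable def yzval (y : V → ℝ) (Ω : Finset (Finset V)) (z : Finset V → ℝ) :
    Sym2 V → ℝ :=
  Sym2.lift ⟨fun u v => y u + y v + ∑ B ∈ Ω, (if u ∈ B ∧ v ∈ B then z B else 0),
    fun u v => by
      have h : ∀ B : Finset V, (u ∈ B ∧ v ∈ B) = (v ∈ B ∧ u ∈ B) :=
        fun B => propext and_comm
      simp only [h]
      ring⟩

/-- `‖e‖ = (‖u‖ + ‖v‖)/2` for an edge `e = uv`, given vertex weights `‖·‖`. -/
def edgeNorm (nrm : V → ℕ) : Sym2 V → ℕ :=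
  Sym2.lift ⟨fun u v => (nrm u + nrm v) / 2, fun u v => by simp [Nat.add_comm]⟩

/-- A walk is alternating (for a path starting at a free vertex): its edges at even
positions are unmatched and its edges at odd positions are matched. -/
def IsAlternating (G : SimpleGraph V) (M : Finset (Sym2 V)) {u v : V}
    (p : G.Walk u v) : Prop :=
  ∀ (i : ℕ) (h : i < p.edges.length), (p.edges.get ⟨i, h⟩ ∈ M ↔ i % 2 = 1)

/-- If every `B ∈ Ω` is full with respect to the matching `M`
(exactly `(|B|−1)/2` edges of `M` have both endpoints in `B`), then
`∑_{e ∈ M} yz(e) = ∑_{u ∈ V∖F} y(u) + ∑_{B ∈ Ω} ((|B|−1)/2) · z(B)`,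
where `F` is the set of `M`-free vertices. -/
theorem mwm_matched_yz_sum
    [Fintype V] [DecidableEq V]
    (G : SimpleGraph V)
    (M : Finset (Sym2 V)) (hM : IsMatching G M)
    (y : V → ℝ)
    (Ω : Finset (Finset V)) (hodd : ∀ B ∈ Ω, Odd B.card)
    (z : Finset V → ℝ)
    (hfull : ∀ B ∈ Ω, 2 * (M.filter (fun e => ∀ v ∈ e, v ∈ B)).card + 1 = B.card) :
    ∑ e ∈ M, yzval y Ω z e =
      (∑ u ∈ Finset.univ.filter (fun v : V => ¬ IsFreeVtx M v), y u)
        + ∑ B ∈ Ω, ((B.card : ℝ) - 1) / 2 * z B := by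
  classical
  -- split each yzval into endpoint part and blossom part
  have hsplit : ∀ e ∈ M, yzval y Ω z e =
      (∑ v ∈ Finset.univ.filter (· ∈ e), y v)
        + ∑ B ∈ Ω, (if ∀ v ∈ e, v ∈ B then z B else 0) := by
    intro e he
    have hG : e ∈ G.edgeSet := hM.1 he
    have hdiag : ¬ e.IsDiag := SimpleGraph.not_isDiag_of_mem_edgeSet G hG
    induction e using Sym2.inductionOn with
    | hf u v =>
      have huv : u ≠ v := by simpa using hdiag
      have hfil : Finset.univ.filter (· ∈ s(u, v)) = {u, v} := by
        ext w; simp [Sym2.mem_iff]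
      have hcond : ∀ B : Finset V, (u ∈ B ∧ v ∈ B) ↔ (∀ w ∈ s(u, v), w ∈ B) := by
        intro B
        constructor
        · rintro ⟨h1, h2⟩ w hw
          rcases Sym2.mem_iff.mp hw with rfl | rfl <;> assumption
        · intro h; exact ⟨h u (by simp), h v (by simp)⟩
      rw [hfil, Finset.sum_pair huv]
      simp only [yzval, Sym2.lift_mk]
      congr 1
      apply Finset.sum_congr rfl
      intro B _
      by_cases h : u ∈ B ∧ v ∈ B
      · rw [if_pos h, if_pos ((hcond B).mp h)]
      · rw [if_neg h, if_neg (fun hh => h ((hcond B).mpr hh))]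
  rw [Finset.sum_congr rfl hsplit, Finset.sum_add_distrib]
  congr 1
  · -- endpoint part
    have hbU : Finset.univ.filter (fun v : V => ¬ IsFreeVtx M v)
        = M.biUnion (fun e => Finset.univ.filter (· ∈ e)) := by
      ext v
      simp only [Finset.mem_filter, Finset.mem_biUnion, Finset.mem_univ, true_and,
        IsFreeVtx]
      push_neg
      simp
    rw [hbU, Finset.sum_biUnion]
    intro e he f hf hef
    simp only [Finset.disjoint_left, Finset.mem_filter, Finset.mem_univ, true_and]
    intro v hv
    exact hM.2 e he f hf hef v hv
  · -- blossom part
    rw [Finset.sum_comm]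
    apply Finset.sum_congr rfl
    intro B hB
    rw [← Finset.sum_filter, Finset.sum_const, nsmul_eq_mul]
    have hc := hfull B hB
    have hcast : ((M.filter (fun e => ∀ v ∈ e, v ∈ B)).card : ℝ)
        = ((B.card : ℝ) - 1) / 2 := by
      have := congrArg (Nat.cast : ℕ → ℝ) hc
      push_cast at this
      linarith
    rw [hcast]
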